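/- arXiv:2504.05635 — 3 statements merged into one kernel-verified Lean document; each statement's English description precedes it below -/
import Mathlib

section
/- Let n ≥ 1, and let μ, β be real numbers with μ < n and n < β + μ. Then there is a constant C (depending on n, μ, β) such that for all x ∈ ℝⁿ: ∫_{ℝⁿ} (1+|y|)^{-β} |x−y|^{-μ} dy ≤ C·(1+|x|)^{n−β−μ} if β < n, and ∫_{ℝⁿ} (1+|y|)^{-β} |x−y|^{-μ} dy ≤ C·(1+|x|)^{−μ} if β > n. -/
open MeasureTheory
open MeasureTheory Measure Set Metric
open scoped ENNReal

section Helpers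

variable {E : Type*} [NormedAddCommGroup E] [NormedSpace ℝ E]
    [MeasurableSpace E] [BorelSpace E] [Nontrivial E] [FiniteDimensional ℝ E]
    (m : Measure E) [m.IsAddHaarMeasure]

lemma lintegral_fun_norm_addHaar'' (f : ℝ → ℝ≥0∞) (hf : Measurable f) :
    ∫⁻ x, f ‖x‖ ∂m
      = m.toSphere univ *
        ∫⁻ y in Ioi (0:ℝ), ENNReal.ofReal (y ^ (Module.finrank ℝ E - 1)) * f y := by
  calc ∫⁻ x, f ‖x‖ ∂m
      = ∫⁻ x : ({0}ᶜ : Set E), f ‖(x : E)‖ ∂(m.comap (↑)) := by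
        rw [lintegral_subtype_comap (measurableSet_singleton (0:E)).compl fun x => f ‖x‖,
          MeasureTheory.restrict_compl_singleton]
    _ = ∫⁻ x : sphere (0 : E) 1 × Ioi (0 : ℝ), f x.2
          ∂m.toSphere.prod (.volumeIoiPow (Module.finrank ℝ E - 1)) := by
        have h := m.measurePreserving_homeomorphUnitSphereProd.lintegral_comp
          (hf.comp (measurable_subtype_coe.comp measurable_snd))
        simpa only [Function.comp_def, homeomorphUnitSphereProd_apply_snd_coe, div_one] using h
    _ = m.toSphere univ * ∫⁻ y : Ioi (0:ℝ), f y
          ∂(Measure.volumeIoiPow (Module.finrank ℝ E - 1)) := by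
        rw [lintegral_prod (fun z : sphere (0:E) 1 × Ioi (0:ℝ) => f z.2)
          (hf.comp (measurable_subtype_coe.comp measurable_snd)).aemeasurable]
        simp [lintegral_const, mul_comm]
    _ = m.toSphere univ *
        ∫⁻ y in Ioi (0:ℝ), ENNReal.ofReal (y ^ (Module.finrank ℝ E - 1)) * f y := by
        congr 1
        rw [Measure.volumeIoiPow, lintegral_withDensity_eq_lintegral_mul _
          ((measurable_subtype_coe.pow_const _).ennreal_ofReal)
          (g := fun y : Ioi (0:ℝ) => f y) (hf.comp measurable_subtype_coe)]
        exact lintegral_subtype_comap measurableSet_Ioi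
          (fun a : ℝ => ENNReal.ofReal (a ^ (Module.finrank ℝ E - 1)) * f a)

lemma lint_ball (a r : ℝ) (ha : a < Module.finrank ℝ E) (hr : 0 < r) :
    ∫⁻ z in ball (0:E) r, ENNReal.ofReal (‖z‖ ^ (-a)) ∂m
      = m.toSphere univ *
        ENNReal.ofReal (r ^ ((Module.finrank ℝ E : ℝ) - a) / ((Module.finrank ℝ E : ℝ) - a)) := by
  set n := Module.finrank ℝ E with hn
  have hn1 : 1 ≤ n := Module.finrank_pos
  have hs : (-1 : ℝ) < (n : ℝ) - 1 - a := by
    have : (1:ℝ) ≤ n := by exact_mod_cast hn1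
    linarith
  have key : ∫⁻ z in ball (0:E) r, ENNReal.ofReal (‖z‖ ^ (-a)) ∂m
      = ∫⁻ x, (Iio r).indicator (fun t => ENNReal.ofReal (t ^ (-a))) ‖x‖ ∂m := by
    rw [← lintegral_indicator measurableSet_ball]
    refine lintegral_congr fun z => ?_
    by_cases h : ‖z‖ ∈ Iio r
    · rw [indicator_of_mem (mem_ball_zero_iff.mpr h), indicator_of_mem h]
    · rw [indicator_of_notMem (fun hz => h (mem_ball_zero_iff.mp hz)), indicator_of_notMem h]
  have hm : Measurable fun t : ℝ => ENNReal.ofReal (t ^ (-a)) :=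
    (measurable_id.pow measurable_const).ennreal_ofReal
  rw [key, lintegral_fun_norm_addHaar'' m _ (hm.indicator measurableSet_Iio)]
  congr 1
  have step1 : ∫⁻ y in Ioi (0:ℝ),
      ENNReal.ofReal (y ^ (n - 1)) * (Iio r).indicator (fun t => ENNReal.ofReal (t ^ (-a))) y
      = ∫⁻ y in Ioo (0:ℝ) r, ENNReal.ofReal (y ^ ((n:ℝ) - 1 - a)) := by
    have eq1 : ∀ y : ℝ, ENNReal.ofReal (y ^ (n - 1)) *
        (Iio r).indicator (fun t => ENNReal.ofReal (t ^ (-a))) y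
        = (Iio r).indicator (fun t => ENNReal.ofReal (t ^ (n - 1)) * ENNReal.ofReal (t ^ (-a))) y := by
      intro y
      by_cases h : y ∈ Iio r
      · rw [indicator_of_mem h, indicator_of_mem h]
      · rw [indicator_of_notMem h, indicator_of_notMem h, mul_zero]
    simp_rw [eq1]
    rw [lintegral_indicator measurableSet_Iio, Measure.restrict_restrict measurableSet_Iio,
      Iio_inter_Ioi]
    refine setLIntegral_congr_fun measurableSet_Ioo (fun y hy => ?_)
    have hy0 : 0 < y := hy.1
    rw [← ENNReal.ofReal_mul (by positivity)]
    congr 1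
    rw [← Real.rpow_natCast y (n-1), Nat.cast_sub hn1, Nat.cast_one, ← Real.rpow_add hy0]
    ring_nf
  rw [step1]
  have hInt : IntegrableOn (fun y : ℝ => y ^ ((n:ℝ) - 1 - a)) (Ioo 0 r) :=
    ((intervalIntegral.intervalIntegrable_rpow' hs).1).mono_set Ioo_subset_Ioc_self
  rw [← ofReal_integral_eq_lintegral_ofReal hInt ?_]
  · congr 1
    rw [restrict_congr_set Ioo_ae_eq_Ioc, ← intervalIntegral.integral_of_le hr.le,
      integral_rpow (Or.inl hs), show (n:ℝ) - 1 - a + 1 = (n:ℝ) - a by ring,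
      Real.zero_rpow (by intro h; linarith), sub_zero]
  · filter_upwards [ae_restrict_mem measurableSet_Ioo] with y hy
    exact Real.rpow_nonneg hy.1.le _

lemma lint_compl_ball (a r : ℝ) (ha : (Module.finrank ℝ E : ℝ) < a) (hr : 0 < r) :
    ∫⁻ z in (ball (0:E) r)ᶜ, ENNReal.ofReal (‖z‖ ^ (-a)) ∂m
      = m.toSphere univ *
        ENNReal.ofReal (r ^ ((Module.finrank ℝ E : ℝ) - a) / (a - (Module.finrank ℝ E : ℝ))) := by
  set n := Module.finrank ℝ E with hn
  have hn1 : 1 ≤ n := Module.finrank_pos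
  have hs : (n:ℝ) - 1 - a < -1 := by linarith
  have key : ∫⁻ z in (ball (0:E) r)ᶜ, ENNReal.ofReal (‖z‖ ^ (-a)) ∂m
      = ∫⁻ x, (Ici r).indicator (fun t => ENNReal.ofReal (t ^ (-a))) ‖x‖ ∂m := by
    rw [← lintegral_indicator measurableSet_ball.compl]
    refine lintegral_congr fun z => ?_
    by_cases h : ‖z‖ ∈ Ici r
    · rw [indicator_of_mem (by simpa [mem_ball_zero_iff] using not_lt.mpr h), indicator_of_mem h]
    · rw [indicator_of_notMem (a := z) (by simpa [mem_ball_zero_iff] using not_le.mp h),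
        indicator_of_notMem h]
  have hm : Measurable fun t : ℝ => ENNReal.ofReal (t ^ (-a)) :=
    (measurable_id.pow measurable_const).ennreal_ofReal
  rw [key, lintegral_fun_norm_addHaar'' m _ (hm.indicator measurableSet_Ici)]
  congr 1
  have step1 : ∫⁻ y in Ioi (0:ℝ),
      ENNReal.ofReal (y ^ (n - 1)) * (Ici r).indicator (fun t => ENNReal.ofReal (t ^ (-a))) y
      = ∫⁻ y in Ioi r, ENNReal.ofReal (y ^ ((n:ℝ) - 1 - a)) := by
    have eq1 : ∀ y : ℝ, ENNReal.ofReal (y ^ (n - 1)) *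
        (Ici r).indicator (fun t => ENNReal.ofReal (t ^ (-a))) y
        = (Ici r).indicator (fun t => ENNReal.ofReal (t ^ (n - 1)) * ENNReal.ofReal (t ^ (-a))) y := by
      intro y
      by_cases h : y ∈ Ici r
      · rw [indicator_of_mem h, indicator_of_mem h]
      · rw [indicator_of_notMem h, indicator_of_notMem h, mul_zero]
    simp_rw [eq1]
    have hss : Ici r ∩ Ioi (0:ℝ) = Ici r := inter_eq_left.2 fun y hy => lt_of_lt_of_le hr hy
    rw [lintegral_indicator measurableSet_Ici, Measure.restrict_restrict measurableSet_Ici,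
      hss, restrict_congr_set (Filter.EventuallyEq.symm Ioi_ae_eq_Ici)]
    refine setLIntegral_congr_fun measurableSet_Ioi (fun y hy => ?_)
    have hy0 : 0 < y := lt_trans hr hy
    rw [← ENNReal.ofReal_mul (by positivity)]
    congr 1
    rw [← Real.rpow_natCast y (n-1), Nat.cast_sub hn1, Nat.cast_one, ← Real.rpow_add hy0]
    ring_nf
  rw [step1]
  have hInt : IntegrableOn (fun y : ℝ => y ^ ((n:ℝ) - 1 - a)) (Ioi r) :=
    integrableOn_Ioi_rpow_of_lt hs hr
  rw [← ofReal_integral_eq_lintegral_ofReal hInt ?_]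
  · congr 1
    rw [integral_Ioi_rpow_of_lt hs hr, show (n:ℝ) - 1 - a + 1 = (n:ℝ) - a by ring,
      show a - (n:ℝ) = -((n:ℝ) - a) by ring, div_neg, neg_div]
  · filter_upwards [ae_restrict_mem measurableSet_Ioi] with y hy
    exact Real.rpow_nonneg (le_of_lt (lt_trans hr hy)) _

lemma lint_shifted_ball (x : E) (a r : ℝ) (ha : a < Module.finrank ℝ E) (hr : 0 < r) :
    ∫⁻ y in ball x r, ENNReal.ofReal (‖x - y‖ ^ (-a)) ∂m
      = m.toSphere univ *
        ENNReal.ofReal (r ^ ((Module.finrank ℝ E : ℝ) - a) / ((Module.finrank ℝ E : ℝ) - a)) := by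
  have hmp := Measure.measurePreserving_sub_left m x
  have hmeas : Measurable fun z : E => ENNReal.ofReal (‖z‖ ^ (-a)) :=
    (measurable_norm.pow measurable_const).ennreal_ofReal
  have hset : (fun y : E => x - y) ⁻¹' (ball 0 r) = ball x r := by
    ext y
    simp only [mem_preimage, mem_ball_zero_iff, mem_ball, dist_eq_norm, norm_sub_rev x y, sub_zero]
  calc ∫⁻ y in ball x r, ENNReal.ofReal (‖x - y‖ ^ (-a)) ∂m
      = ∫⁻ z in ball (0:E) r, ENNReal.ofReal (‖z‖ ^ (-a)) ∂m := by
        rw [← hset]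
        exact hmp.setLIntegral_comp_preimage measurableSet_ball hmeas
    _ = _ := lint_ball m a r ha hr

lemma rpow_half (R e : ℝ) (hR : 0 < R) : (R/2)^e = R^e * 2^(-e) := by
  rw [div_eq_mul_inv, Real.mul_rpow hR.le (by norm_num),
    Real.inv_rpow (by norm_num), ← Real.rpow_neg (by norm_num)]

lemma rpow_two_mul (R e : ℝ) (hR : 0 ≤ R) : (2*R)^e = 2^e * R^e :=
  Real.mul_rpow (by norm_num) hR

end Helpers

set_option maxHeartbeats 1000000 in
/-- Hardy-type convolution estimate: for `μ < n` and `n < β + μ`, the integral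
`∫ ⟨y⟩^{-β} |x-y|^{-μ} dy` is bounded by `C⟨x⟩^{n-β-μ}` if `β < n` and by `C⟨x⟩^{-μ}` if `β > n`. -/
theorem statement0 (n : ℕ) (hn : 1 ≤ n) (μ β : ℝ) (hμ : μ < n) (hβμ : (n : ℝ) < β + μ) :
    ∃ C : ℝ, 0 < C ∧ ∀ x : EuclideanSpace ℝ (Fin n),
      (β < n →
        ∫ y : EuclideanSpace ℝ (Fin n), (1 + ‖y‖) ^ (-β) * ‖x - y‖ ^ (-μ)
          ≤ C * (1 + ‖x‖) ^ ((n : ℝ) - β - μ)) ∧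
      ((n : ℝ) < β →
        ∫ y : EuclideanSpace ℝ (Fin n), (1 + ‖y‖) ^ (-β) * ‖x - y‖ ^ (-μ)
          ≤ C * (1 + ‖x‖) ^ (-μ)) := by
  haveI : Nonempty (Fin n) := ⟨⟨0, hn⟩⟩
  have hfrn : Module.finrank ℝ (EuclideanSpace ℝ (Fin n)) = n := finrank_euclideanSpace_fin
  have hfr : (Module.finrank ℝ (EuclideanSpace ℝ (Fin n)) : ℝ) = (n:ℝ) := by rw [hfrn]
  have hβ0 : 0 < β := by linarith
  have hνμ : (0:ℝ) < (n:ℝ) - μ := by linarith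
  have hβμν : (0:ℝ) < β + μ - (n:ℝ) := by linarith
  set S := (volume : Measure (EuclideanSpace ℝ (Fin n))).toSphere univ with hS
  have hSfin : S ≠ ⊤ := measure_ne_top _ _
  set κ := S.toReal with hκ
  have hκ0 : 0 ≤ κ := ENNReal.toReal_nonneg
  have hSκ : S = ENNReal.ofReal κ := (ENNReal.ofReal_toReal hSfin).symm
  -- reduction from Bochner integral to lintegral
  have red : ∀ (x : EuclideanSpace ℝ (Fin n)) (C e : ℝ), 0 ≤ C →
      (∫⁻ y, ENNReal.ofReal ((1 + ‖y‖) ^ (-β) * ‖x - y‖ ^ (-μ))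
        ≤ ENNReal.ofReal (C * (1+‖x‖)^e)) →
      ∫ y, (1 + ‖y‖) ^ (-β) * ‖x - y‖ ^ (-μ) ≤ C * (1+‖x‖)^e := by
    intro x C e hC h
    have hnn : 0 ≤ᵐ[volume] fun y : EuclideanSpace ℝ (Fin n) =>
        (1 + ‖y‖) ^ (-β) * ‖x - y‖ ^ (-μ) :=
      Filter.Eventually.of_forall fun y => by positivity
    have hmeas : AEStronglyMeasurable
        (fun y : EuclideanSpace ℝ (Fin n) => (1 + ‖y‖) ^ (-β) * ‖x - y‖ ^ (-μ)) volume := by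
      apply Measurable.aestronglyMeasurable
      fun_prop
    rw [integral_eq_lintegral_of_nonneg_ae hnn hmeas]
    exact ENNReal.toReal_le_of_le_ofReal (by positivity) h
  -- the case μ ≤ 0 : a single global bound
  have low : μ ≤ 0 → ∃ K : ℝ, 0 ≤ K ∧ ∀ x : EuclideanSpace ℝ (Fin n),
      ∫⁻ y, ENNReal.ofReal ((1 + ‖y‖) ^ (-β) * ‖x - y‖ ^ (-μ))
        ≤ ENNReal.ofReal (K * (1+‖x‖)^(-μ)) := by
    intro hμ0
    have hfin : (∫⁻ y : EuclideanSpace ℝ (Fin n), ENNReal.ofReal ((1+‖y‖)^(-(β+μ)))) ≠ ⊤ := by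
      refine (finite_integral_one_add_norm ?_).ne
      rw [hfr]; exact hβμ
    refine ⟨(∫⁻ y : EuclideanSpace ℝ (Fin n), ENNReal.ofReal ((1+‖y‖)^(-(β+μ)))).toReal,
      ENNReal.toReal_nonneg, fun x => ?_⟩
    have hR0 : (0:ℝ) < 1 + ‖x‖ := by positivity
    calc ∫⁻ y, ENNReal.ofReal ((1 + ‖y‖) ^ (-β) * ‖x - y‖ ^ (-μ))
        ≤ ∫⁻ y, ENNReal.ofReal ((1+‖x‖)^(-μ) * (1+‖y‖)^(-(β+μ))) := by
          refine lintegral_mono fun y => ENNReal.ofReal_le_ofReal ?_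
          have hb : ‖x - y‖ ≤ (1+‖x‖) * (1+‖y‖) := by
            calc ‖x - y‖ ≤ ‖x‖ + ‖y‖ := norm_sub_le x y
            _ ≤ (1+‖x‖)*(1+‖y‖) := by nlinarith [norm_nonneg x, norm_nonneg y]
          have h1 : ‖x-y‖^(-μ) ≤ ((1+‖x‖)*(1+‖y‖))^(-μ) :=
            Real.rpow_le_rpow (norm_nonneg _) hb (by linarith)
          calc (1+‖y‖)^(-β) * ‖x-y‖^(-μ)
              ≤ (1+‖y‖)^(-β) * ((1+‖x‖)*(1+‖y‖))^(-μ) :=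
                mul_le_mul_of_nonneg_left h1 (Real.rpow_nonneg (by positivity) _)
            _ = (1+‖x‖)^(-μ) * (1+‖y‖)^(-(β+μ)) := by
                rw [Real.mul_rpow (by positivity) (by positivity),
                  show -(β+μ) = -β + -μ by ring, Real.rpow_add (by positivity)]
                ring
      _ = ENNReal.ofReal ((1+‖x‖)^(-μ)) *
            ∫⁻ y, ENNReal.ofReal ((1+‖y‖)^(-(β+μ))) := by
          simp_rw [ENNReal.ofReal_mul (Real.rpow_nonneg hR0.le _)]
          exact lintegral_const_mul _ (by fun_prop)
      _ ≤ ENNReal.ofReal ((∫⁻ y : EuclideanSpace ℝ (Fin n),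
            ENNReal.ofReal ((1+‖y‖)^(-(β+μ)))).toReal * (1+‖x‖)^(-μ)) := by
          conv_lhs => rw [← ENNReal.ofReal_toReal hfin]
          rw [← ENNReal.ofReal_mul (Real.rpow_nonneg hR0.le _)]
          exact ENNReal.ofReal_le_ofReal (le_of_eq (by ring))
  -- splitting of the domain
  have split : ∀ x : EuclideanSpace ℝ (Fin n),
      ∫⁻ y, ENNReal.ofReal ((1 + ‖y‖) ^ (-β) * ‖x - y‖ ^ (-μ))
      = (∫⁻ y in ball x ((1+‖x‖)/2), ENNReal.ofReal ((1 + ‖y‖) ^ (-β) * ‖x - y‖ ^ (-μ)))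
        + ((∫⁻ y in ball (0 : EuclideanSpace ℝ (Fin n)) (2*(1+‖x‖)) ∩ (ball x ((1+‖x‖)/2))ᶜ,
              ENNReal.ofReal ((1 + ‖y‖) ^ (-β) * ‖x - y‖ ^ (-μ)))
          + (∫⁻ y in (ball (0 : EuclideanSpace ℝ (Fin n)) (2*(1+‖x‖)))ᶜ ∩ (ball x ((1+‖x‖)/2))ᶜ,
              ENNReal.ofReal ((1 + ‖y‖) ^ (-β) * ‖x - y‖ ^ (-μ)))) := by
    intro x
    rw [← lintegral_add_compl (fun y => ENNReal.ofReal ((1 + ‖y‖) ^ (-β) * ‖x - y‖ ^ (-μ)))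
      (measurableSet_ball (x := x) (ε := (1+‖x‖)/2))]
    congr 1
    rw [← Measure.restrict_restrict measurableSet_ball,
      ← Measure.restrict_restrict measurableSet_ball.compl]
    exact (lintegral_add_compl _ measurableSet_ball).symm
  -- Region A : the ball around x
  have T1 : 0 < μ → ∃ K : ℝ, 0 ≤ K ∧ ∀ x : EuclideanSpace ℝ (Fin n),
      ∫⁻ y in ball x ((1+‖x‖)/2), ENNReal.ofReal ((1 + ‖y‖) ^ (-β) * ‖x - y‖ ^ (-μ))
        ≤ ENNReal.ofReal (K * (1+‖x‖)^((n:ℝ)-β-μ)) := by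
    intro hμ0
    refine ⟨κ/((n:ℝ)-μ) * 2^(-((n:ℝ)-β-μ)), by positivity, fun x => ?_⟩
    have hR0 : (0:ℝ) < 1 + ‖x‖ := by positivity
    have hRh : (0:ℝ) < (1+‖x‖)/2 := by positivity
    calc ∫⁻ y in ball x ((1+‖x‖)/2), ENNReal.ofReal ((1 + ‖y‖) ^ (-β) * ‖x - y‖ ^ (-μ))
        ≤ ∫⁻ y in ball x ((1+‖x‖)/2),
            ENNReal.ofReal (((1+‖x‖)/2)^(-β) * ‖x - y‖ ^ (-μ)) := by
          refine setLIntegral_mono (by fun_prop) fun y hy => ENNReal.ofReal_le_ofReal ?_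
          have hxy : ‖x - y‖ < (1+‖x‖)/2 := by
            have h := mem_ball.mp hy
            rw [dist_eq_norm, norm_sub_rev] at h
            exact h
          have h2 := norm_sub_norm_le x y
          have h1y : (1+‖x‖)/2 ≤ 1 + ‖y‖ := by linarith
          exact mul_le_mul_of_nonneg_right
            (Real.rpow_le_rpow_of_nonpos hRh h1y (by linarith))
            (Real.rpow_nonneg (norm_nonneg _) _)
      _ = ENNReal.ofReal (((1+‖x‖)/2)^(-β)) *
            ∫⁻ y in ball x ((1+‖x‖)/2), ENNReal.ofReal (‖x - y‖ ^ (-μ)) := by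
          simp_rw [ENNReal.ofReal_mul (Real.rpow_nonneg hRh.le _)]
          exact lintegral_const_mul _ (by fun_prop)
      _ = ENNReal.ofReal (((1+‖x‖)/2)^(-β)) * (ENNReal.ofReal κ *
            ENNReal.ofReal ((((1+‖x‖)/2))^((n:ℝ)-μ)/((n:ℝ)-μ))) := by
          rw [lint_shifted_ball volume x μ ((1+‖x‖)/2) (by rw [hfrn]; exact hμ) hRh,
            hfr, ← hS, hSκ]
      _ = ENNReal.ofReal ((κ/((n:ℝ)-μ) * 2^(-((n:ℝ)-β-μ))) * (1+‖x‖)^((n:ℝ)-β-μ)) := by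
          rw [← ENNReal.ofReal_mul hκ0, ← ENNReal.ofReal_mul (Real.rpow_nonneg hRh.le _)]
          congr 1
          have e2 : ((1+‖x‖)/2)^(-β) * ((1+‖x‖)/2)^((n:ℝ)-μ) = ((1+‖x‖)/2)^((n:ℝ)-β-μ) := by
            rw [← Real.rpow_add hRh]; congr 1; ring
          calc ((1+‖x‖)/2)^(-β) * (κ * (((1+‖x‖)/2)^((n:ℝ)-μ)/((n:ℝ)-μ)))
              = (κ/((n:ℝ)-μ)) * (((1+‖x‖)/2)^(-β) * ((1+‖x‖)/2)^((n:ℝ)-μ)) := by ring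
            _ = (κ/((n:ℝ)-μ)) * ((1+‖x‖)/2)^((n:ℝ)-β-μ) := by rw [e2]
            _ = _ := by rw [rpow_half _ _ hR0]; ring
  -- Region B ∩ Aᶜ, case β < n
  have T2lt : 0 < μ → β < (n:ℝ) → ∃ K : ℝ, 0 ≤ K ∧ ∀ x : EuclideanSpace ℝ (Fin n),
      ∫⁻ y in ball (0 : EuclideanSpace ℝ (Fin n)) (2*(1+‖x‖)) ∩ (ball x ((1+‖x‖)/2))ᶜ,
          ENNReal.ofReal ((1 + ‖y‖) ^ (-β) * ‖x - y‖ ^ (-μ))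
        ≤ ENNReal.ofReal (K * (1+‖x‖)^((n:ℝ)-β-μ)) := by
    intro hμ0 hβn
    have hνβ : (0:ℝ) < (n:ℝ) - β := by linarith
    refine ⟨2^μ * (2^((n:ℝ)-β) * (κ/((n:ℝ)-β))), by positivity, fun x => ?_⟩
    have hR0 : (0:ℝ) < 1 + ‖x‖ := by positivity
    have hRh : (0:ℝ) < (1+‖x‖)/2 := by positivity
    have h2R : (0:ℝ) < 2*(1+‖x‖) := by positivity
    calc ∫⁻ y in ball (0 : EuclideanSpace ℝ (Fin n)) (2*(1+‖x‖)) ∩ (ball x ((1+‖x‖)/2))ᶜ,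
          ENNReal.ofReal ((1 + ‖y‖) ^ (-β) * ‖x - y‖ ^ (-μ))
        ≤ ∫⁻ y in ball (0 : EuclideanSpace ℝ (Fin n)) (2*(1+‖x‖)) ∩ (ball x ((1+‖x‖)/2))ᶜ,
            ENNReal.ofReal (((1+‖x‖)/2)^(-μ) * (1+‖y‖)^(-β)) := by
          refine setLIntegral_mono (by fun_prop) fun y hy => ENNReal.ofReal_le_ofReal ?_
          have hxy : (1+‖x‖)/2 ≤ ‖x - y‖ := by
            have h := hy.2
            rw [mem_compl_iff, mem_ball, dist_eq_norm, not_lt, norm_sub_rev] at h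
            exact h
          rw [mul_comm]
          exact mul_le_mul_of_nonneg_right
            (Real.rpow_le_rpow_of_nonpos hRh hxy (by linarith))
            (Real.rpow_nonneg (by positivity) _)
      _ ≤ ∫⁻ y in ball (0 : EuclideanSpace ℝ (Fin n)) (2*(1+‖x‖)),
            ENNReal.ofReal (((1+‖x‖)/2)^(-μ) * (1+‖y‖)^(-β)) :=
          lintegral_mono_set inter_subset_left
      _ = ENNReal.ofReal (((1+‖x‖)/2)^(-μ)) *
            ∫⁻ y in ball (0 : EuclideanSpace ℝ (Fin n)) (2*(1+‖x‖)),
              ENNReal.ofReal ((1+‖y‖)^(-β)) := by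
          simp_rw [ENNReal.ofReal_mul (Real.rpow_nonneg hRh.le _)]
          exact lintegral_const_mul _ (by fun_prop)
      _ ≤ ENNReal.ofReal (((1+‖x‖)/2)^(-μ)) *
            ∫⁻ y in ball (0 : EuclideanSpace ℝ (Fin n)) (2*(1+‖x‖)),
              ENNReal.ofReal (‖y‖^(-β)) := by
          refine mul_le_mul_right (lintegral_mono_ae ?_) _
          have h0 : ∀ᵐ (y : EuclideanSpace ℝ (Fin n)) ∂volume, y ≠ 0 := by
            rw [ae_iff]
            have hset : {y : EuclideanSpace ℝ (Fin n) | ¬ y ≠ 0} = {0} := by ext y; simp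
            rw [hset]; exact measure_singleton 0
          filter_upwards [ae_restrict_of_ae h0] with y hy
          exact ENNReal.ofReal_le_ofReal (Real.rpow_le_rpow_of_nonpos (norm_pos_iff.mpr hy)
            (by linarith [norm_nonneg y]) (by linarith))
      _ = ENNReal.ofReal ((2^μ * (2^((n:ℝ)-β) * (κ/((n:ℝ)-β)))) * (1+‖x‖)^((n:ℝ)-β-μ)) := by
          rw [lint_ball volume β (2*(1+‖x‖)) (by rw [hfrn]; exact hβn) h2R, hfr, ← hS, hSκ]
          rw [← ENNReal.ofReal_mul hκ0, ← ENNReal.ofReal_mul (Real.rpow_nonneg hRh.le _)]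
          congr 1
          have e3 : (1+‖x‖)^(-μ) * (1+‖x‖)^((n:ℝ)-β) = (1+‖x‖)^((n:ℝ)-β-μ) := by
            rw [← Real.rpow_add hR0]; congr 1; ring
          rw [rpow_half _ _ hR0, neg_neg, rpow_two_mul _ _ hR0.le, ← e3]
          ring
  -- Region B ∩ Aᶜ, case β > n
  have T2gt : 0 < μ → (n:ℝ) < β → ∃ K : ℝ, 0 ≤ K ∧ ∀ x : EuclideanSpace ℝ (Fin n),
      ∫⁻ y in ball (0 : EuclideanSpace ℝ (Fin n)) (2*(1+‖x‖)) ∩ (ball x ((1+‖x‖)/2))ᶜ,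
          ENNReal.ofReal ((1 + ‖y‖) ^ (-β) * ‖x - y‖ ^ (-μ))
        ≤ ENNReal.ofReal (K * (1+‖x‖)^(-μ)) := by
    intro hμ0 hβn
    have hfin : (∫⁻ y : EuclideanSpace ℝ (Fin n), ENNReal.ofReal ((1+‖y‖)^(-β))) ≠ ⊤ := by
      refine (finite_integral_one_add_norm ?_).ne
      rw [hfr]; exact hβn
    refine ⟨2^μ * (∫⁻ y : EuclideanSpace ℝ (Fin n), ENNReal.ofReal ((1+‖y‖)^(-β))).toReal,
      by positivity, fun x => ?_⟩
    have hR0 : (0:ℝ) < 1 + ‖x‖ := by positivity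
    have hRh : (0:ℝ) < (1+‖x‖)/2 := by positivity
    calc ∫⁻ y in ball (0 : EuclideanSpace ℝ (Fin n)) (2*(1+‖x‖)) ∩ (ball x ((1+‖x‖)/2))ᶜ,
          ENNReal.ofReal ((1 + ‖y‖) ^ (-β) * ‖x - y‖ ^ (-μ))
        ≤ ∫⁻ y in ball (0 : EuclideanSpace ℝ (Fin n)) (2*(1+‖x‖)) ∩ (ball x ((1+‖x‖)/2))ᶜ,
            ENNReal.ofReal (((1+‖x‖)/2)^(-μ) * (1+‖y‖)^(-β)) := by
          refine setLIntegral_mono (by fun_prop) fun y hy => ENNReal.ofReal_le_ofReal ?_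
          have hxy : (1+‖x‖)/2 ≤ ‖x - y‖ := by
            have h := hy.2
            rw [mem_compl_iff, mem_ball, dist_eq_norm, not_lt, norm_sub_rev] at h
            exact h
          rw [mul_comm]
          exact mul_le_mul_of_nonneg_right
            (Real.rpow_le_rpow_of_nonpos hRh hxy (by linarith))
            (Real.rpow_nonneg (by positivity) _)
      _ ≤ ∫⁻ y, ENNReal.ofReal (((1+‖x‖)/2)^(-μ) * (1+‖y‖)^(-β)) :=
          lintegral_mono' Measure.restrict_le_self le_rfl
      _ = ENNReal.ofReal (((1+‖x‖)/2)^(-μ)) *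
            ∫⁻ y, ENNReal.ofReal ((1+‖y‖)^(-β)) := by
          simp_rw [ENNReal.ofReal_mul (Real.rpow_nonneg hRh.le _)]
          exact lintegral_const_mul _ (by fun_prop)
      _ ≤ ENNReal.ofReal ((2^μ * (∫⁻ y : EuclideanSpace ℝ (Fin n),
            ENNReal.ofReal ((1+‖y‖)^(-β))).toReal) * (1+‖x‖)^(-μ)) := by
          conv_lhs => rw [← ENNReal.ofReal_toReal hfin]
          rw [← ENNReal.ofReal_mul (Real.rpow_nonneg hRh.le _)]
          refine ENNReal.ofReal_le_ofReal (le_of_eq ?_)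
          rw [rpow_half _ _ hR0, neg_neg]
          ring
  -- Region Bᶜ ∩ Aᶜ
  have T3 : 0 < μ → ∃ K : ℝ, 0 ≤ K ∧ ∀ x : EuclideanSpace ℝ (Fin n),
      ∫⁻ y in (ball (0 : EuclideanSpace ℝ (Fin n)) (2*(1+‖x‖)))ᶜ ∩ (ball x ((1+‖x‖)/2))ᶜ,
          ENNReal.ofReal ((1 + ‖y‖) ^ (-β) * ‖x - y‖ ^ (-μ))
        ≤ ENNReal.ofReal (K * (1+‖x‖)^((n:ℝ)-β-μ)) := by
    intro hμ0
    refine ⟨2^μ * (2^((n:ℝ)-β-μ) * (κ/(β+μ-(n:ℝ)))), by positivity, fun x => ?_⟩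
    have hR0 : (0:ℝ) < 1 + ‖x‖ := by positivity
    have h2R : (0:ℝ) < 2*(1+‖x‖) := by positivity
    calc ∫⁻ y in (ball (0 : EuclideanSpace ℝ (Fin n)) (2*(1+‖x‖)))ᶜ ∩ (ball x ((1+‖x‖)/2))ᶜ,
          ENNReal.ofReal ((1 + ‖y‖) ^ (-β) * ‖x - y‖ ^ (-μ))
        ≤ ∫⁻ y in (ball (0 : EuclideanSpace ℝ (Fin n)) (2*(1+‖x‖)))ᶜ ∩ (ball x ((1+‖x‖)/2))ᶜ,
            ENNReal.ofReal (2^μ * ‖y‖^(-(β+μ))) := by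
          refine setLIntegral_mono (by fun_prop) fun y hy => ENNReal.ofReal_le_ofReal ?_
          have hyB : 2*(1+‖x‖) ≤ ‖y‖ := by
            have h := hy.1
            rw [mem_compl_iff, mem_ball_zero_iff, not_lt] at h
            exact h
          have hy0 : (0:ℝ) < ‖y‖ := lt_of_lt_of_le h2R hyB
          have h1 : ‖y‖/2 ≤ ‖x - y‖ := by
            have h2 := norm_sub_norm_le y x
            rw [norm_sub_rev y x] at h2
            linarith
          have t1 : ‖x-y‖^(-μ) ≤ (‖y‖/2)^(-μ) :=
            Real.rpow_le_rpow_of_nonpos (by positivity) h1 (by linarith)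
          have t2 : (‖y‖/2)^(-μ) = ‖y‖^(-μ) * 2^μ := by
            rw [rpow_half _ _ hy0, neg_neg]
          have t3 : (1+‖y‖)^(-β) ≤ ‖y‖^(-β) :=
            Real.rpow_le_rpow_of_nonpos hy0 (by linarith) (by linarith)
          calc (1+‖y‖)^(-β) * ‖x-y‖^(-μ)
              ≤ ‖y‖^(-β) * (‖y‖^(-μ) * 2^μ) :=
                mul_le_mul t3 (t1.trans_eq t2) (Real.rpow_nonneg (norm_nonneg _) _)
                  (Real.rpow_nonneg hy0.le _)
            _ = 2^μ * ‖y‖^(-(β+μ)) := by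
                rw [show -(β+μ) = -β + -μ by ring, Real.rpow_add hy0]
                ring
      _ ≤ ∫⁻ y in (ball (0 : EuclideanSpace ℝ (Fin n)) (2*(1+‖x‖)))ᶜ,
            ENNReal.ofReal (2^μ * ‖y‖^(-(β+μ))) :=
          lintegral_mono_set inter_subset_left
      _ = ENNReal.ofReal ((2:ℝ)^μ) *
            ∫⁻ y in (ball (0 : EuclideanSpace ℝ (Fin n)) (2*(1+‖x‖)))ᶜ,
              ENNReal.ofReal (‖y‖^(-(β+μ))) := by
          simp_rw [ENNReal.ofReal_mul (Real.rpow_nonneg (by norm_num : (0:ℝ) ≤ 2) _)]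
          exact lintegral_const_mul _ (by fun_prop)
      _ = ENNReal.ofReal ((2^μ * (2^((n:ℝ)-β-μ) * (κ/(β+μ-(n:ℝ))))) * (1+‖x‖)^((n:ℝ)-β-μ)) := by
          rw [lint_compl_ball volume (β+μ) (2*(1+‖x‖)) (by rw [hfr]; exact hβμ) h2R, hfr, ← hS,
            hSκ, show (n:ℝ) - (β+μ) = (n:ℝ)-β-μ by ring]
          rw [← ENNReal.ofReal_mul hκ0,
            ← ENNReal.ofReal_mul (Real.rpow_nonneg (by norm_num : (0:ℝ) ≤ 2) _)]
          congr 1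
          rw [rpow_two_mul _ _ hR0.le]
          ring
  -- Assembly
  rcases lt_trichotomy β (n:ℝ) with hβn | hβn | hβn
  · -- β < n
    rcases le_or_gt μ 0 with hμ0 | hμ0
    · obtain ⟨K, hK, hbound⟩ := low hμ0
      refine ⟨K + 1, by linarith, fun x => ⟨fun _ => ?_, fun h => absurd h (by linarith)⟩⟩
      refine red x (K+1) _ (by linarith) ?_
      refine (hbound x).trans (ENNReal.ofReal_le_ofReal ?_)
      have hR1 : (1:ℝ) ≤ 1 + ‖x‖ := by linarith [norm_nonneg x]
      have he := Real.rpow_le_rpow_of_exponent_le hR1 (show -μ ≤ (n:ℝ)-β-μ by linarith)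
      nlinarith [Real.rpow_nonneg (by positivity : (0:ℝ) ≤ 1+‖x‖) ((n:ℝ)-β-μ),
        Real.rpow_nonneg (by positivity : (0:ℝ) ≤ 1+‖x‖) (-μ)]
    · obtain ⟨K1, hK1, h1⟩ := T1 hμ0
      obtain ⟨K2, hK2, h2⟩ := T2lt hμ0 hβn
      obtain ⟨K3, hK3, h3⟩ := T3 hμ0
      refine ⟨K1+K2+K3+1, by linarith, fun x => ⟨fun _ => ?_, fun h => absurd h (by linarith)⟩⟩
      refine red x _ _ (by linarith) ?_
      rw [split x]
      have hR0 : (0:ℝ) < 1 + ‖x‖ := by positivity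
      calc _ ≤ ENNReal.ofReal (K1 * (1+‖x‖)^((n:ℝ)-β-μ))
            + (ENNReal.ofReal (K2 * (1+‖x‖)^((n:ℝ)-β-μ))
              + ENNReal.ofReal (K3 * (1+‖x‖)^((n:ℝ)-β-μ))) :=
          add_le_add (h1 x) (add_le_add (h2 x) (h3 x))
        _ ≤ ENNReal.ofReal ((K1+K2+K3+1) * (1+‖x‖)^((n:ℝ)-β-μ)) := by
          rw [← ENNReal.ofReal_add (by positivity) (by positivity),
            ← ENNReal.ofReal_add (by positivity) (by positivity)]
          refine ENNReal.ofReal_le_ofReal ?_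
          nlinarith [Real.rpow_nonneg hR0.le ((n:ℝ)-β-μ)]
  · -- β = n : both statements are vacuous
    exact ⟨1, one_pos, fun x =>
      ⟨fun h => absurd h (by rw [hβn]; exact lt_irrefl _),
       fun h => absurd h (by rw [hβn]; exact lt_irrefl _)⟩⟩
  · -- β > n
    rcases le_or_gt μ 0 with hμ0 | hμ0
    · obtain ⟨K, hK, hbound⟩ := low hμ0
      refine ⟨K + 1, by linarith, fun x => ⟨fun h => absurd h (by linarith), fun _ => ?_⟩⟩
      refine red x (K+1) _ (by linarith) ?_
      refine (hbound x).trans (ENNReal.ofReal_le_ofReal ?_)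
      exact mul_le_mul_of_nonneg_right (by linarith) (Real.rpow_nonneg (by positivity) _)
    · obtain ⟨K1, hK1, h1⟩ := T1 hμ0
      obtain ⟨K2, hK2, h2⟩ := T2gt hμ0 hβn
      obtain ⟨K3, hK3, h3⟩ := T3 hμ0
      refine ⟨K1+K2+K3+1, by linarith, fun x => ⟨fun h => absurd h (by linarith), fun _ => ?_⟩⟩
      refine red x _ _ (by linarith) ?_
      rw [split x]
      have hR0 : (0:ℝ) < 1 + ‖x‖ := by positivity
      have hR1 : (1:ℝ) ≤ 1 + ‖x‖ := by linarith [norm_nonneg x]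
      have he := Real.rpow_le_rpow_of_exponent_le hR1 (show (n:ℝ)-β-μ ≤ -μ by linarith)
      have hmono : ∀ K : ℝ, 0 ≤ K → ENNReal.ofReal (K * (1+‖x‖)^((n:ℝ)-β-μ))
          ≤ ENNReal.ofReal (K * (1+‖x‖)^(-μ)) := fun K hK =>
        ENNReal.ofReal_le_ofReal (mul_le_mul_of_nonneg_left he hK)
      calc _ ≤ ENNReal.ofReal (K1 * (1+‖x‖)^(-μ))
            + (ENNReal.ofReal (K2 * (1+‖x‖)^(-μ))
              + ENNReal.ofReal (K3 * (1+‖x‖)^(-μ))) :=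
          add_le_add ((h1 x).trans (hmono K1 hK1))
            (add_le_add (h2 x) ((h3 x).trans (hmono K3 hK3)))
        _ ≤ ENNReal.ofReal ((K1+K2+K3+1) * (1+‖x‖)^(-μ)) := by
          rw [← ENNReal.ofReal_add (by positivity) (by positivity),
            ← ENNReal.ofReal_add (by positivity) (by positivity)]
          refine ENNReal.ofReal_le_ofReal ?_
          nlinarith [Real.rpow_nonneg hR0.le (-μ)]
end

section
/- Let n ≥ 1 and, for s > 0 and a unit vector ω ∈ ℝⁿ, define ψ_{sω}(ξ) := (|ξ−ω|² + |ξ|² + s^{−2})^{-1} for ξ ∈ ℝⁿ. Then for every multi-index α there is a constant C_α independent of s ≥ 1 and ω such that |∂_ξ^α ψ_{sω}(ξ)| ≤ C_α (1+|ξ|)^{−2−|α|} for all ξ ∈ ℝⁿ. -/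
open Set Finset

private lemma aux_inv_bound (m i : ℕ) (him : i ≤ m) (y : ℝ) (hy : 1/8 ≤ y) :
    ‖iteratedFDeriv ℝ i (Inv.inv : ℝ → ℝ) y‖ ≤ (m.factorial : ℝ) * 8 ^ (m + 1) := by
  have hy0 : (0:ℝ) < y := lt_of_lt_of_le (by norm_num) hy
  rw [norm_iteratedFDeriv_eq_norm_iteratedDeriv, iteratedDeriv_eq_iterate, iter_deriv_inv]
  rw [Real.norm_eq_abs, abs_mul]
  have h1 : |∏ j ∈ Finset.range i, (-1 - (j:ℝ))| = (i.factorial : ℝ) := by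
    rw [Finset.abs_prod]
    have h : ∀ j ∈ Finset.range i, |(-1 - (j:ℝ))| = (j:ℝ) + 1 := by
      intro j _
      have hj : (0:ℝ) ≤ (j:ℝ) := Nat.cast_nonneg j
      rw [abs_of_nonpos (by linarith)]
      ring
    rw [Finset.prod_congr rfl h]
    have := Finset.prod_range_add_one_eq_factorial i
    exact_mod_cast congrArg (Nat.cast : ℕ → ℝ) this
  have h2 : |y ^ (-1 - (i:ℤ))| ≤ (8:ℝ) ^ (m + 1) := by
    have he : y ^ (-1 - (i:ℤ)) = (y ^ (i+1))⁻¹ := by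
      rw [show (-1 - (i:ℤ)) = -((i+1 : ℕ) : ℤ) by push_cast; ring, zpow_neg, zpow_natCast]
    rw [he, abs_of_nonneg (by positivity)]
    have h8 : ((8:ℝ) ^ (i+1))⁻¹ ≤ y ^ (i+1) := by
      calc ((8:ℝ) ^ (i+1))⁻¹ = (1/8 : ℝ) ^ (i+1) := by rw [one_div, inv_pow]
        _ ≤ y ^ (i+1) := pow_le_pow_left₀ (by norm_num) hy _
    calc (y ^ (i+1))⁻¹ ≤ (((8:ℝ) ^ (i+1))⁻¹)⁻¹ := by
          exact inv_anti₀ (by positivity) h8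
      _ = (8:ℝ) ^ (i+1) := inv_inv _
      _ ≤ (8:ℝ) ^ (m+1) := pow_le_pow_right₀ (by norm_num) (by omega)
  calc |(-1) ^ i * (i.factorial : ℝ)| * |y ^ (-1 - (i:ℤ))|
      ≤ (i.factorial : ℝ) * (8:ℝ) ^ (m+1) := by
        rw [abs_mul, abs_pow, abs_neg, abs_one, one_pow, one_mul, Nat.abs_cast]; exact mul_le_mul_of_nonneg_left h2 (by positivity)
    _ ≤ (m.factorial : ℝ) * (8:ℝ) ^ (m+1) := by
        have hf : (i.factorial : ℝ) ≤ (m.factorial : ℝ) := by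
          exact_mod_cast Nat.factorial_le him
        exact mul_le_mul_of_nonneg_right hf (by positivity)

private lemma aux_arith1 (R : ℝ) (hR1 : 1 ≤ R) :
    4 * (R^2)⁻¹ * (R - 1) + 2 * (R^2)⁻¹ ≤ 6 / R := by
  have hR0 : (0:ℝ) < R := by linarith
  have h6 : (6:ℝ) / R = 6 * R * (R^2)⁻¹ := by field_simp
  rw [h6]
  nlinarith [mul_nonneg (show (0:ℝ) ≤ 2*R + 2 by linarith) (inv_nonneg.mpr (sq_nonneg R))]

private lemma aux_arith2 (R : ℝ) (hR1 : 1 ≤ R) : 4 * (R^2)⁻¹ ≤ (6 / R)^2 := by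
  have hR0 : (0:ℝ) < R := by linarith
  have h6 : ((6:ℝ) / R)^2 = 36 * (R^2)⁻¹ := by
    rw [div_pow, div_eq_mul_inv]; norm_num
  rw [h6]
  nlinarith [inv_nonneg.mpr (sq_nonneg R)]

private lemma aux_arith3 (a b : ℝ) (ha : 0 ≤ a) (hb : 0 ≤ b) (h1 : 1 ≤ a + b) :
    (1 + b)^2 ≤ 8 * (a^2 + b^2) := by
  nlinarith [sq_nonneg (a - b), sq_nonneg (a + b - 1)]

set_option maxHeartbeats 2000000 in
set_option synthInstance.maxHeartbeats 200000 in
/-- Uniform symbol estimates of order `-2` for the family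
`ψ_{sω}(ξ) = (|ξ-ω|² + |ξ|² + s⁻²)⁻¹`, `s ≥ 1`, `ω ∈ S^{n-1}`. -/
theorem statement8 (n : ℕ) (hn : 1 ≤ n) (m : ℕ) :
    ∃ C : ℝ, ∀ (s : ℝ), 1 ≤ s → ∀ ω : EuclideanSpace ℝ (Fin n), ‖ω‖ = 1 →
      ∀ ξ : EuclideanSpace ℝ (Fin n),
        ‖iteratedFDeriv ℝ m
            (fun ζ : EuclideanSpace ℝ (Fin n) => (‖ζ - ω‖ ^ 2 + ‖ζ‖ ^ 2 + s ^ (-2 : ℝ))⁻¹) ξ‖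
          ≤ C * (1 + ‖ξ‖) ^ (-2 - (m : ℝ)) := by
  classical
  refine ⟨(m.factorial : ℝ) * ((m.factorial : ℝ) * 8 ^ (m + 1)) * 6 ^ m, ?_⟩
  intro s hs ω hω ξ
  obtain ⟨R, hRdef⟩ : ∃ R : ℝ, R = 1 + ‖ξ‖ := ⟨_, rfl⟩
  rw [← hRdef]
  have hR1 : (1:ℝ) ≤ R := by rw [hRdef]; have := norm_nonneg ξ; linarith
  have hR0 : (0:ℝ) < R := by linarith
  have hRne : R ≠ 0 := ne_of_gt hR0
  obtain ⟨r, hrdef⟩ : ∃ r : ℝ, r = (R ^ 2)⁻¹ := ⟨_, rfl⟩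
  have hr0 : (0:ℝ) < r := by rw [hrdef]; positivity
  have hc : (0:ℝ) < s ^ (-2:ℝ) := Real.rpow_pos_of_pos (by linarith) _
  obtain ⟨c, hcdef⟩ : ∃ c : ℝ, c = s ^ (-2:ℝ) := ⟨_, rfl⟩
  rw [← hcdef] at hc ⊢
  obtain ⟨q, hqdef⟩ : ∃ q : EuclideanSpace ℝ (Fin n) → ℝ,
      q = fun ζ => ‖ζ - ω‖ ^ 2 + ‖ζ‖ ^ 2 + c := ⟨_, rfl⟩
  obtain ⟨p, hpdef⟩ : ∃ p : EuclideanSpace ℝ (Fin n) → ℝ, p = fun ζ => r * q ζ := ⟨_, rfl⟩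
  have hq_pos : ∀ ζ, 0 < q ζ := fun ζ => by
    have h0 : (0:ℝ) ≤ ‖ζ - ω‖ ^ 2 + ‖ζ‖ ^ 2 := by positivity
    simp only [hqdef]; linarith
  have hp_pos : ∀ ζ, 0 < p ζ := fun ζ => by
    simp only [hpdef]; exact mul_pos hr0 (hq_pos ζ)
  -- smoothness of q and p
  have hq_cd : ContDiff ℝ ⊤ q := by
    rw [hqdef]
    refine ContDiff.add (ContDiff.add ?_ ?_) contDiff_const
    · exact (contDiff_id.sub contDiff_const).norm_sq ℝ
    · exact contDiff_id.norm_sq ℝ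
  have hp_cd : ContDiff ℝ ⊤ p := by
    rw [hpdef]; exact contDiff_const.mul hq_cd
  -- the bilinear inner product map
  obtain ⟨B, hBapp⟩ : ∃ B : EuclideanSpace ℝ (Fin n) →L[ℝ] EuclideanSpace ℝ (Fin n) →L[ℝ] ℝ,
      ∀ x y : EuclideanSpace ℝ (Fin n), B x y = inner ℝ x y :=
    ⟨(isBoundedBilinearMap_inner (𝕜 := ℝ)
        (E := EuclideanSpace ℝ (Fin n))).toContinuousLinearMap, fun x y => rfl⟩
  have hBnorm : ∀ x : EuclideanSpace ℝ (Fin n), ‖B x‖ ≤ ‖x‖ := by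
    intro x
    refine ContinuousLinearMap.opNorm_le_bound _ (norm_nonneg x) (fun y => ?_)
    rw [hBapp]
    exact abs_real_inner_le_norm x y
  -- derivative of p
  have hd : ∀ ζ : EuclideanSpace ℝ (Fin n),
      HasFDerivAt p (((4*r) • B) ζ - (2*r) • B ω) ζ := by
    intro ζ
    have h1 : HasFDerivAt (fun z : EuclideanSpace ℝ (Fin n) => ‖z - ω‖ ^ 2)
        (2 • (innerSL ℝ (ζ - ω))) ζ := by
      have := ((hasFDerivAt_id ζ).sub_const ω).norm_sq
      simpa using this
    have h2 : HasFDerivAt (fun z : EuclideanSpace ℝ (Fin n) => ‖z‖ ^ 2)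
        (2 • innerSL ℝ ζ) ζ := by
      simpa using (hasFDerivAt_id ζ).norm_sq
    have h3 := ((h1.add h2).add_const c).const_mul r
    have heq : r • (2 • (innerSL ℝ (ζ - ω)) + 2 • innerSL ℝ ζ)
        = ((4*r) • B) ζ - (2*r) • B ω := by
      ext v
      simp only [ContinuousLinearMap.smul_apply, ContinuousLinearMap.add_apply,
        ContinuousLinearMap.sub_apply, innerSL_apply_apply, hBapp, smul_eq_mul, nsmul_eq_mul,
        Nat.cast_ofNat]
      rw [inner_sub_left]
      push_cast
      ring
    rw [heq] at h3
    rw [hpdef, hqdef]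
    exact h3
  have hDp : fderiv ℝ p = fun ζ => ((4*r) • B) ζ - (2*r) • B ω :=
    funext fun ζ => (hd ζ).fderiv
  have hDDp : fderiv ℝ (fun z : EuclideanSpace ℝ (Fin n) => ((4*r) • B) z - (2*r) • B ω)
      = fun _ => (4*r) • B :=
    funext fun ζ => (((4*r) • B).hasFDerivAt.sub_const _).fderiv
  -- bounds on derivatives of p
  have hD : ∀ i, 1 ≤ i → i ≤ m → ‖iteratedFDeriv ℝ i p ξ‖ ≤ (6 / R) ^ i := by
    intro i hi1 him
    obtain ⟨k, rfl⟩ : ∃ k, i = k + 1 := ⟨i - 1, by omega⟩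
    rw [← norm_iteratedFDeriv_fderiv, hDp]
    match k with
    | 0 =>
      rw [norm_iteratedFDeriv_zero]
      have hb : ‖((4*r) • B) ξ - (2*r) • B ω‖ ≤ 4 * r * ‖ξ‖ + 2 * r := by
        refine (norm_sub_le _ _).trans ?_
        have e1 : ‖((4*r) • B) ξ‖ ≤ 4 * r * ‖ξ‖ := by
          rw [ContinuousLinearMap.smul_apply]
          calc ‖(4*r) • (B ξ)‖ ≤ ‖(4*r : ℝ)‖ * ‖B ξ‖ := ContinuousLinearMap.opNorm_smul_le _ _
            _ = (4*r) * ‖B ξ‖ := by rw [Real.norm_eq_abs, abs_of_nonneg (by positivity)]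
            _ ≤ 4 * r * ‖ξ‖ := mul_le_mul_of_nonneg_left (hBnorm ξ) (by positivity)
        have e2 : ‖(2*r) • B ω‖ ≤ 2 * r := by
          calc ‖(2*r) • B ω‖ ≤ ‖(2*r : ℝ)‖ * ‖B ω‖ := ContinuousLinearMap.opNorm_smul_le _ _
            _ = (2*r) * ‖B ω‖ := by rw [Real.norm_eq_abs, abs_of_nonneg (by positivity)]
            _ ≤ (2*r) * ‖ω‖ := mul_le_mul_of_nonneg_left (hBnorm ω) (by positivity)
            _ = 2 * r := by rw [hω, mul_one]
        linarith
      refine hb.trans ?_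
      have hx : ‖ξ‖ = R - 1 := by rw [hRdef]; ring
      calc 4 * r * ‖ξ‖ + 2 * r = 4 * (R^2)⁻¹ * (R - 1) + 2 * (R^2)⁻¹ := by rw [hx, hrdef]
        _ ≤ 6 / R := aux_arith1 R hR1
        _ = (6 / R) ^ (0 + 1) := by rw [zero_add, pow_one]
    | (j+1) =>
      rw [← norm_iteratedFDeriv_fderiv, hDDp]
      match j with
      | 0 =>
        rw [norm_iteratedFDeriv_zero]
        have hb : ‖(4*r) • B‖ ≤ 4 * r := by
          have hBn : ‖B‖ ≤ 1 := by
            refine ContinuousLinearMap.opNorm_le_bound _ (by norm_num) (fun x => ?_)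
            calc ‖B x‖ ≤ ‖x‖ := hBnorm x
              _ = 1 * ‖x‖ := (one_mul _).symm
          calc ‖(4*r) • B‖ ≤ ‖(4*r : ℝ)‖ * ‖B‖ := ContinuousLinearMap.opNorm_smul_le _ _
            _ = (4*r) * ‖B‖ := by rw [Real.norm_eq_abs, abs_of_nonneg (by positivity)]
            _ ≤ (4*r) * 1 := mul_le_mul_of_nonneg_left hBn (by positivity)
            _ = 4 * r := by ring
        refine hb.trans ?_
        calc 4 * r = 4 * (R^2)⁻¹ := by rw [hrdef]
          _ ≤ (6 / R) ^ 2 := aux_arith2 R hR1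
          _ = (6 / R) ^ (0 + 1 + 1) := by norm_num
      | (l+1) =>
        rw [iteratedFDeriv_const_of_ne (Nat.succ_ne_zero l)]
        simp only [Pi.zero_apply, norm_zero]
        positivity
  -- lower bound for p ξ
  have hpξ : (1:ℝ)/8 ≤ p ξ := by
    have htri : (1:ℝ) ≤ ‖ξ - ω‖ + ‖ξ‖ := by
      have h := calc ‖ω‖ = ‖ξ - (ξ - ω)‖ := by rw [sub_sub_cancel]
        _ ≤ ‖ξ‖ + ‖ξ - ω‖ := norm_sub_le _ _
      rw [hω] at h; linarith
    have hq8 : R ^ 2 / 8 ≤ q ξ := by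
      have h1 : (0:ℝ) ≤ ‖ξ - ω‖ := norm_nonneg _
      have h2 : (0:ℝ) ≤ ‖ξ‖ := norm_nonneg _
      have hkey : R ^ 2 ≤ 8 * (‖ξ - ω‖ ^ 2 + ‖ξ‖ ^ 2) := by
        rw [hRdef]
        exact aux_arith3 _ _ h1 h2 htri
      simp only [hqdef]
      linarith
    have hmul : R ^ 2 / 8 * r ≤ q ξ * r := mul_le_mul_of_nonneg_right hq8 hr0.le
    calc (1:ℝ)/8 = R ^ 2 / 8 * r := by rw [hrdef]; field_simp
      _ ≤ q ξ * r := hmul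
      _ = p ξ := by rw [hpdef]; ring
  have hpmem : ∀ ζ : EuclideanSpace ℝ (Fin n), p ζ ∈ Ioi (0:ℝ) := fun ζ => hp_pos ζ
  have hC' : ∀ i, i ≤ m →
      ‖iteratedFDerivWithin ℝ i (Inv.inv : ℝ → ℝ) (Ioi 0) (p ξ)‖
        ≤ (m.factorial : ℝ) * 8 ^ (m + 1) := by
    intro i him
    rw [iteratedFDerivWithin_of_isOpen i isOpen_Ioi (hpmem ξ)]
    exact aux_inv_bound m i him _ hpξ
  -- composition
  have hg : ContDiffOn ℝ ⊤ (Inv.inv : ℝ → ℝ) (Ioi 0) :=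
    ContDiffOn.mono (contDiffOn_inv ℝ) (fun x hx => ne_of_gt hx)
  have hmaps : MapsTo p univ (Ioi (0:ℝ)) := fun ζ _ => hpmem ζ
  have hD' : ∀ i, 1 ≤ i → i ≤ m →
      ‖iteratedFDerivWithin ℝ i p univ ξ‖ ≤ (6 / R) ^ i := by
    intro i h1 h2
    rw [iteratedFDerivWithin_univ]
    exact hD i h1 h2
  have key :
      ‖iteratedFDerivWithin ℝ m ((Inv.inv : ℝ → ℝ) ∘ p) univ ξ‖
        ≤ (m.factorial : ℝ) * ((m.factorial : ℝ) * 8 ^ (m + 1)) * (6 / R) ^ m :=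
    norm_iteratedFDerivWithin_comp_le hg hp_cd.contDiffOn le_top
      isOpen_Ioi.uniqueDiffOn uniqueDiffOn_univ hmaps (mem_univ ξ) hC' hD'
  rw [iteratedFDerivWithin_univ] at key
  -- rewrite the target function
  have hco : ContDiff ℝ (m : ℕ) ((Inv.inv : ℝ → ℝ) ∘ p) := by
    have h : ContDiff ℝ ⊤ (fun ζ : EuclideanSpace ℝ (Fin n) => (p ζ)⁻¹) :=
      hp_cd.inv (fun ζ => ne_of_gt (hp_pos ζ))
    exact h.of_le le_top
  have hfun : (fun ζ : EuclideanSpace ℝ (Fin n) => (‖ζ - ω‖ ^ 2 + ‖ζ‖ ^ 2 + c)⁻¹)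
      = fun ζ : EuclideanSpace ℝ (Fin n) => r • ((Inv.inv : ℝ → ℝ) ∘ p) ζ := by
    funext ζ
    have hq0 : q ζ ≠ 0 := ne_of_gt (hq_pos ζ)
    have hr0' : r ≠ 0 := ne_of_gt hr0
    have hqv : ‖ζ - ω‖ ^ 2 + ‖ζ‖ ^ 2 + c = q ζ := by rw [hqdef]
    simp only [Function.comp_apply, smul_eq_mul, hpdef, hqv, mul_inv]
    field_simp
  rw [hfun, iteratedFDeriv_const_smul_apply' hco.contDiffAt, norm_smul, Real.norm_eq_abs,
    abs_of_nonneg hr0.le]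
  have step : r * ‖iteratedFDeriv ℝ m ((Inv.inv : ℝ → ℝ) ∘ p) ξ‖
      ≤ r * ((m.factorial : ℝ) * ((m.factorial : ℝ) * 8 ^ (m + 1)) * (6 / R) ^ m) :=
    mul_le_mul_of_nonneg_left key hr0.le
  refine step.trans (le_of_eq ?_)
  have hrpow : R ^ (-2 - (m:ℝ)) = (R ^ (m + 2 : ℕ))⁻¹ := by
    rw [show (-2 - (m:ℝ)) = -((m + 2 : ℕ) : ℝ) by push_cast; ring,
      Real.rpow_neg hR0.le, Real.rpow_natCast]
  rw [hrpow, hrdef, div_pow]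
  field_simp
  ring
end

section
/- Let n ≥ 5 be odd and let c₀, …, c_{(n−3)/2} be given real constants. For η > 0 and r > 0 define F(η, r) := Σ_{j=0}^{(n−3)/2} c_j (ηr)^j − e^{−r√(1+η²)} Σ_{j=0}^{(n−3)/2} c_j (i r √(1+η²))^j. Then for every ℓ ∈ ℕ there is a constant C_ℓ such that for all 0 < η ≤ 1/2 and all r > 0: |∂_η^ℓ F(η, r)| ≤ C_ℓ ( r^ℓ (1 + ηr)^{(n−3)/2 − ℓ} + (1+r)^{(n−3)/2 + ℓ} e^{−r} ). In particular |∂_η^ℓ F(η, r)| ≤ C_ℓ' η^{−ℓ} (1 + ηr)^{(n−3)/2}. -/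
noncomputable section

open Finset

namespace St13

/-- iterated derivative of a complex polynomial restricted to the reals -/
lemma polyIterDeriv (a : ℕ → ℂ) (m : ℕ) (i : ℕ) :
    iteratedDeriv i (fun t : ℝ => ∑ j ∈ Finset.range (m + 1), a j * (t : ℂ) ^ j)
      = fun t : ℝ => ∑ j ∈ Finset.range (m + 1),
          a j * (j.descFactorial i : ℂ) * (t : ℂ) ^ (j - i) := by
  induction i with
  | zero => simp
  | succ i ih =>
    rw [iteratedDeriv_succ, ih]
    funext t
    have h : HasDerivAt (fun t : ℝ => ∑ j ∈ Finset.range (m + 1),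
        a j * (j.descFactorial i : ℂ) * (t : ℂ) ^ (j - i))
        (∑ j ∈ Finset.range (m + 1),
          a j * (j.descFactorial i : ℂ) * (((j - i : ℕ) : ℂ) * (t : ℂ) ^ (j - i - 1))) t := by
      refine HasDerivAt.fun_sum fun j _ => ?_
      exact ((hasDerivAt_pow (j - i) ((t : ℝ) : ℂ)).comp_ofReal).const_mul _
    rw [h.deriv]
    refine Finset.sum_congr rfl fun j _ => ?_
    rw [Nat.descFactorial_succ, show j - (i + 1) = j - i - 1 from by omega]
    push_cast
    ring

lemma expIterDeriv (r : ℝ) (i : ℕ) :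
    iteratedDeriv i (fun u : ℝ => Complex.exp (-(r : ℂ) * u))
      = fun u : ℝ => (-(r : ℂ)) ^ i * Complex.exp (-(r : ℂ) * u) := by
  induction i with
  | zero => simp
  | succ i ih =>
    rw [iteratedDeriv_succ, ih]
    funext u
    have h : HasDerivAt (fun u : ℝ => Complex.exp (-(r : ℂ) * u))
        (Complex.exp (-(r : ℂ) * u) * (-(r : ℂ))) u := by
      have := (((hasDerivAt_id ((u : ℝ) : ℂ)).const_mul (-(r : ℂ))).cexp).comp_ofReal
      simpa using this
    have h2 := h.const_mul ((-(r : ℂ)) ^ i)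
    rw [h2.deriv, pow_succ]
    ring

lemma ofReal_contDiff {N : WithTop ℕ∞} : ContDiff ℝ N (fun t : ℝ => (t : ℂ)) :=
  Complex.ofRealCLM.contDiff

lemma poly_contDiff (a : ℕ → ℂ) (m : ℕ) {N : WithTop ℕ∞} :
    ContDiff ℝ N (fun t : ℝ => ∑ j ∈ Finset.range (m + 1), a j * (t : ℂ) ^ j) :=
  ContDiff.sum fun j _ => contDiff_const.mul (ofReal_contDiff.pow j)

lemma cexp_contDiff (r : ℝ) {N : WithTop ℕ∞} :
    ContDiff ℝ N (fun u : ℝ => Complex.exp (-(r : ℂ) * u)) := by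
  have : ContDiff ℝ N (fun u : ℝ => -(r : ℂ) * (u : ℂ)) := contDiff_const.mul ofReal_contDiff
  exact ((Complex.contDiff_exp (𝕜 := ℂ)).restrict_scalars ℝ).comp this

def sf : ℝ → ℝ := fun t => Real.sqrt (1 + t ^ 2)

lemma sf_contDiff {N : WithTop ℕ∞} : ContDiff ℝ N sf :=
  ContDiff.sqrt (contDiff_const.add (contDiff_id.pow 2)) (fun t => by positivity)

def Pf (c : ℕ → ℝ) (m : ℕ) (r : ℝ) : ℝ → ℂ :=
  fun t => ∑ j ∈ Finset.range (m + 1), ((c j : ℂ) * (r : ℂ) ^ j) * (t : ℂ) ^ j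

def Gf (c : ℕ → ℝ) (m : ℕ) (r : ℝ) : ℝ → ℂ :=
  fun u => Complex.exp (-(r : ℂ) * u) *
    ∑ j ∈ Finset.range (m + 1), ((c j : ℂ) * (Complex.I * (r : ℂ)) ^ j) * (u : ℂ) ^ j

lemma Pf_contDiff (c : ℕ → ℝ) (m : ℕ) (r : ℝ) {N : WithTop ℕ∞} : ContDiff ℝ N (Pf c m r) :=
  poly_contDiff _ m

lemma Gf_contDiff (c : ℕ → ℝ) (m : ℕ) (r : ℝ) {N : WithTop ℕ∞} : ContDiff ℝ N (Gf c m r) :=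
  (cexp_contDiff r).mul (poly_contDiff _ m)

lemma descFactorial_le_factorial (j k : ℕ) : j.descFactorial k ≤ j.factorial := by
  rcases le_or_gt k j with h | h
  · calc j.descFactorial k ≤ (j - k).factorial * j.descFactorial k :=
        Nat.le_mul_of_pos_left _ (Nat.factorial_pos _)
      _ = j.factorial := Nat.factorial_mul_descFactorial h
  · rw [Nat.descFactorial_eq_zero_iff_lt.2 h]; exact Nat.zero_le _

lemma pow_mul_exp_neg_le (k : ℕ) {x : ℝ} (hx : 0 ≤ x) :
    x ^ k * Real.exp (-x) ≤ (k.factorial : ℝ) := by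
  have h1 : x ^ k / (k.factorial : ℝ) ≤ Real.exp x := by
    refine le_trans ?_ (Real.sum_le_exp_of_nonneg hx (k + 1))
    refine Finset.single_le_sum (f := fun i => x ^ i / (i.factorial : ℝ))
      (fun i _ => by positivity) (Finset.self_mem_range_succ k)
  rw [div_le_iff₀ (by positivity)] at h1
  have hexp := Real.exp_pos x
  rw [Real.exp_neg]
  calc x ^ k * (Real.exp x)⁻¹ ≤ (Real.exp x * (k.factorial : ℝ)) * (Real.exp x)⁻¹ := by
        apply mul_le_mul_of_nonneg_right h1 (by positivity)
    _ = (k.factorial : ℝ) := by field_simp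

lemma sf_bound (ℓ : ℕ) : ∃ D : ℝ, 1 ≤ D ∧ ∀ i, 1 ≤ i → i ≤ ℓ →
    ∀ t ∈ Set.Icc (0 : ℝ) 1, ‖iteratedFDeriv ℝ i sf t‖ ≤ D ^ i := by
  have hb : ∀ i : ℕ, ∃ Ki : ℝ, ∀ t ∈ Set.Icc (0 : ℝ) 1, ‖iteratedFDeriv ℝ i sf t‖ ≤ Ki := by
    intro i
    refine isCompact_Icc.exists_bound_of_continuousOn ?_
    refine Continuous.continuousOn ?_
    exact (sf_contDiff (N := (⊤ : ℕ∞))).continuous_iteratedFDeriv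
      (by exact_mod_cast le_top)
  choose K hK using hb
  have hsum0 : (0:ℝ) ≤ ∑ i ∈ Finset.range (ℓ + 1), |K i| :=
    Finset.sum_nonneg fun _ _ => abs_nonneg _
  refine ⟨1 + ∑ i ∈ Finset.range (ℓ + 1), |K i|, by linarith, fun i hi1 hi2 t ht => ?_⟩
  have h1 : ‖iteratedFDeriv ℝ i sf t‖ ≤ K i := hK i t ht
  have h2 : K i ≤ ∑ i ∈ Finset.range (ℓ + 1), |K i| := by
    refine le_trans (le_abs_self _) ?_
    exact Finset.single_le_sum (f := fun i => |K i|) (fun i _ => abs_nonneg _)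
      (Finset.mem_range.2 (by omega))
  have h3 : (1 : ℝ) + ∑ i ∈ Finset.range (ℓ + 1), |K i|
      ≤ (1 + ∑ i ∈ Finset.range (ℓ + 1), |K i|) ^ i := by
    refine le_self_pow₀ ?_ (by omega)
    have : (0:ℝ) ≤ ∑ i ∈ Finset.range (ℓ + 1), |K i| :=
      Finset.sum_nonneg fun _ _ => abs_nonneg _
    linarith
  calc ‖iteratedFDeriv ℝ i sf t‖ ≤ K i := h1
    _ ≤ 1 + ∑ i ∈ Finset.range (ℓ + 1), |K i| := by linarith
    _ ≤ _ := h3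

lemma Gf_bound (c : ℕ → ℝ) (m : ℕ) {r : ℝ} (hr : 0 < r) (ℓ : ℕ) {i : ℕ} (hi : i ≤ ℓ)
    {u : ℝ} (hu1 : 1 ≤ u) (hu2 : u ≤ 2) :
    ‖iteratedFDeriv ℝ i (Gf c m r) u‖ ≤
      2 ^ ℓ * (∑ j ∈ Finset.range (m + 1), |c j| * (j.factorial : ℝ) * 2 ^ j)
        * ((1 + r) ^ m * ((1 + r) ^ ℓ * Real.exp (-r))) := by
  set K1 : ℝ := ∑ j ∈ Finset.range (m + 1), |c j| * (j.factorial : ℝ) * 2 ^ j with hK1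
  have hK10 : 0 ≤ K1 := Finset.sum_nonneg fun j _ => by positivity
  set Ef : ℝ → ℂ := fun u => Complex.exp (-(r : ℂ) * u) with hEf
  set Qf : ℝ → ℂ := fun u =>
    ∑ j ∈ Finset.range (m + 1), ((c j : ℂ) * (Complex.I * (r : ℂ)) ^ j) * (u : ℂ) ^ j with hQf
  -- bound on the derivatives of the exponential factor
  have hE : ∀ k, k ≤ ℓ → ‖iteratedFDeriv ℝ k Ef u‖ ≤ (1 + r) ^ ℓ * Real.exp (-r) := by
    intro k hk
    rw [norm_iteratedFDeriv_eq_norm_iteratedDeriv, hEf, expIterDeriv]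
    have h1 : ‖(-(r : ℂ)) ^ k * Complex.exp (-(r : ℂ) * u)‖ = r ^ k * Real.exp (-(r * u)) := by
      rw [norm_mul, norm_pow, Complex.norm_exp]
      have : (-(r : ℂ) * (u : ℂ)).re = -(r * u) := by simp
      rw [this, norm_neg, Complex.norm_real, Real.norm_eq_abs, abs_of_pos hr]
    rw [h1]
    have h2 : r ^ k ≤ (1 + r) ^ ℓ := by
      calc r ^ k ≤ (1 + r) ^ k := pow_le_pow_left₀ hr.le (by linarith) k
        _ ≤ (1 + r) ^ ℓ := pow_le_pow_right₀ (by linarith) hk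
    have h3 : Real.exp (-(r * u)) ≤ Real.exp (-r) := by
      apply Real.exp_le_exp.2; nlinarith
    have := Real.exp_pos (-(r * u))
    calc r ^ k * Real.exp (-(r * u)) ≤ (1 + r) ^ ℓ * Real.exp (-(r * u)) := by
          apply mul_le_mul_of_nonneg_right h2 this.le
      _ ≤ (1 + r) ^ ℓ * Real.exp (-r) := by
          apply mul_le_mul_of_nonneg_left h3 (by positivity)
  -- bound on the derivatives of the polynomial factor
  have hQ : ∀ k, ‖iteratedFDeriv ℝ k Qf u‖ ≤ K1 * (1 + r) ^ m := by
    intro k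
    rw [norm_iteratedFDeriv_eq_norm_iteratedDeriv, hQf, polyIterDeriv]
    refine le_trans (norm_sum_le _ _) ?_
    rw [hK1, Finset.sum_mul]
    refine Finset.sum_le_sum fun j hj => ?_
    rw [Finset.mem_range] at hj
    have hnorm : ‖(c j : ℂ) * (Complex.I * (r : ℂ)) ^ j * (j.descFactorial k : ℂ)
        * (u : ℂ) ^ (j - k)‖ = |c j| * r ^ j * (j.descFactorial k : ℝ) * u ^ (j - k) := by
      rw [norm_mul, norm_mul, norm_pow, norm_mul, norm_pow]
      simp [Complex.norm_real, Real.norm_eq_abs, abs_of_pos hr,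
        abs_of_pos (lt_of_lt_of_le one_pos hu1)]
    rw [hnorm]
    have b1 : r ^ j ≤ (1 + r) ^ m := by
      calc r ^ j ≤ (1 + r) ^ j := pow_le_pow_left₀ hr.le (by linarith) j
        _ ≤ (1 + r) ^ m := pow_le_pow_right₀ (by linarith) (by omega)
    have b2 : ((j.descFactorial k : ℕ) : ℝ) ≤ (j.factorial : ℝ) := by
      exact_mod_cast descFactorial_le_factorial j k
    have b3 : u ^ (j - k) ≤ 2 ^ j := by
      calc u ^ (j - k) ≤ 2 ^ (j - k) := pow_le_pow_left₀ (by linarith) hu2 _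
        _ ≤ 2 ^ j := pow_le_pow_right₀ one_le_two (by omega)
    have hd0 : (0:ℝ) ≤ (j.descFactorial k : ℝ) := Nat.cast_nonneg _
    have hu0 : (0:ℝ) ≤ u ^ (j - k) := by positivity
    have step1 : |c j| * r ^ j * (j.descFactorial k : ℝ)
        ≤ |c j| * (1 + r) ^ m * (j.factorial : ℝ) :=
      mul_le_mul (mul_le_mul_of_nonneg_left b1 (abs_nonneg _)) b2 hd0 (by positivity)
    calc |c j| * r ^ j * (j.descFactorial k : ℝ) * u ^ (j - k)
        ≤ |c j| * (1 + r) ^ m * (j.factorial : ℝ) * 2 ^ j :=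
          mul_le_mul step1 b3 hu0 (by positivity)
      _ = |c j| * (j.factorial : ℝ) * 2 ^ j * (1 + r) ^ m := by ring
  -- multiply
  have hmul := norm_iteratedFDeriv_mul_le (𝕜 := ℝ) (N := (i : WithTop ℕ∞)) (f := Ef) (g := Qf)
    (cexp_contDiff r) (poly_contDiff (fun j => (c j : ℂ) * (Complex.I * (r : ℂ)) ^ j) m)
    u (le_refl _)
  have hGfeq : Gf c m r = fun y => Ef y * Qf y := rfl
  rw [hGfeq]
  refine le_trans hmul ?_
  have hterm : ∀ j ∈ Finset.range (i + 1),
      (i.choose j : ℝ) * ‖iteratedFDeriv ℝ j Ef u‖ * ‖iteratedFDeriv ℝ (i - j) Qf u‖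
        ≤ (i.choose j : ℝ) * (((1 + r) ^ ℓ * Real.exp (-r)) * (K1 * (1 + r) ^ m)) := by
    intro j hj
    rw [Finset.mem_range] at hj
    have hEQ : ‖iteratedFDeriv ℝ j Ef u‖ * ‖iteratedFDeriv ℝ (i - j) Qf u‖
        ≤ ((1 + r) ^ ℓ * Real.exp (-r)) * (K1 * (1 + r) ^ m) :=
      mul_le_mul (hE j (by omega)) (hQ (i - j)) (norm_nonneg _) (by positivity)
    calc (i.choose j : ℝ) * ‖iteratedFDeriv ℝ j Ef u‖ * ‖iteratedFDeriv ℝ (i - j) Qf u‖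
        = (i.choose j : ℝ) * (‖iteratedFDeriv ℝ j Ef u‖ * ‖iteratedFDeriv ℝ (i - j) Qf u‖) := by
          ring
      _ ≤ _ := mul_le_mul_of_nonneg_left hEQ (Nat.cast_nonneg _)
  refine le_trans (Finset.sum_le_sum hterm) ?_
  rw [← Finset.sum_mul]
  have hchoose : ∑ j ∈ Finset.range (i + 1), (i.choose j : ℝ) = 2 ^ i := by
    exact_mod_cast congrArg (Nat.cast (R := ℝ)) (Nat.sum_range_choose i)
  rw [hchoose]
  have h2i : (2:ℝ) ^ i ≤ 2 ^ ℓ := pow_le_pow_right₀ one_le_two hi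
  calc (2:ℝ) ^ i * (((1 + r) ^ ℓ * Real.exp (-r)) * (K1 * (1 + r) ^ m))
      ≤ 2 ^ ℓ * (((1 + r) ^ ℓ * Real.exp (-r)) * (K1 * (1 + r) ^ m)) := by
        apply mul_le_mul_of_nonneg_right h2i (by positivity)
    _ = 2 ^ ℓ * K1 * ((1 + r) ^ m * ((1 + r) ^ ℓ * Real.exp (-r))) := by ring

lemma iteratedDeriv_sub' {f g : ℝ → ℂ} {ℓ : ℕ} (hf : ContDiff ℝ ℓ f) (hg : ContDiff ℝ ℓ g)
    (x : ℝ) : iteratedDeriv ℓ (fun t => f t - g t) x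
      = iteratedDeriv ℓ f x - iteratedDeriv ℓ g x := by
  rw [iteratedDeriv_eq_iteratedFDeriv, iteratedDeriv_eq_iteratedFDeriv,
    iteratedDeriv_eq_iteratedFDeriv]
  have hfg : (fun t => f t - g t) = f + -g := by funext t; simp [sub_eq_add_neg]
  rw [hfg, iteratedFDeriv_add_apply (g := -g) hf.contDiffAt hg.neg.contDiffAt, iteratedFDeriv_neg_apply]
  simp [sub_eq_add_neg]

end St13

open St13 Finset

/-- The non-oscillatory factor `F(η,r)` of the kernel of `R₀⁺(η⁴+η²)` in odd dimensions:
`F(η,r) = Σ c_j (ηr)^j − e^{−r√(1+η²)} Σ c_j (ir√(1+η²))^j`, sums over `0 ≤ j ≤ (n−3)/2`. -/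
def F13 (n : ℕ) (c : ℕ → ℝ) (η r : ℝ) : ℂ :=
  (∑ j ∈ Finset.range ((n - 3) / 2 + 1), ((c j : ℝ) : ℂ) * (((η * r : ℝ)) : ℂ) ^ j) -
    Complex.exp (-((r * Real.sqrt (1 + η ^ 2) : ℝ) : ℂ)) *
      ∑ j ∈ Finset.range ((n - 3) / 2 + 1),
        ((c j : ℝ) : ℂ) * (Complex.I * ((r * Real.sqrt (1 + η ^ 2) : ℝ) : ℂ)) ^ j

set_option maxHeartbeats 1000000 in
/-- Derivative bounds for `F(η,r)` in odd dimensions `n ≥ 5`, uniformly for `0 < η ≤ 1/2`. -/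
theorem statement13 (n : ℕ) (hn : 5 ≤ n) (hodd : Odd n) (c : ℕ → ℝ) (ℓ : ℕ) :
    ∃ C C' : ℝ, 0 < C ∧ 0 < C' ∧ ∀ η r : ℝ, 0 < η → η ≤ 1 / 2 → 0 < r →
      ‖iteratedDeriv ℓ (fun t : ℝ => F13 n c t r) η‖
          ≤ C * (r ^ (ℓ : ℝ) * (1 + η * r) ^ (((n : ℝ) - 3) / 2 - ℓ)
              + (1 + r) ^ (((n : ℝ) - 3) / 2 + ℓ) * Real.exp (-r)) ∧
      ‖iteratedDeriv ℓ (fun t : ℝ => F13 n c t r) η‖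
          ≤ C' * η ^ (-(ℓ : ℝ)) * (1 + η * r) ^ (((n : ℝ) - 3) / 2) := by
  classical
  set m : ℕ := (n - 3) / 2 with hmdef
  have hm : ((n : ℝ) - 3) / 2 = (m : ℝ) := by
    obtain ⟨k, hk⟩ := hodd
    subst hk
    have h2 : m = k - 1 := by omega
    rw [h2, Nat.cast_sub (by omega : 1 ≤ k)]
    push_cast
    ring
  obtain ⟨D, hD1, hD⟩ := sf_bound ℓ
  set A : ℝ := ∑ j ∈ Finset.range (m + 1), |c j| * (j.descFactorial ℓ : ℝ) with hAdef
  set K1 : ℝ := ∑ j ∈ Finset.range (m + 1), |c j| * (j.factorial : ℝ) * 2 ^ j with hK1def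
  have hA0 : 0 ≤ A := Finset.sum_nonneg fun j _ => by positivity
  have hK10 : 0 ≤ K1 := Finset.sum_nonneg fun j _ => by positivity
  set B : ℝ := (ℓ.factorial : ℝ) * 2 ^ ℓ * K1 * D ^ ℓ + 1 with hBdef
  have hB0 : 0 < B := by positivity
  set M : ℝ := Real.exp 1 * ((m + ℓ).factorial : ℝ) with hMdef
  have hM0 : 0 < M := by positivity
  refine ⟨A + B, (A + B) * (1 + M), by linarith, by positivity, fun η r hη hη2 hr => ?_⟩
  rw [hm]
  -- basic facts
  have hηr0 : 0 < η * r := mul_pos hη hr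
  have hs1 : 1 ≤ sf η := by
    rw [show (1:ℝ) = Real.sqrt 1 from Real.sqrt_one.symm]
    exact Real.sqrt_le_sqrt (by nlinarith)
  have hs2 : sf η ≤ 2 := by
    rw [show (2:ℝ) = Real.sqrt 4 from by rw [show (4:ℝ) = 2 ^ 2 by norm_num, Real.sqrt_sq]; norm_num]
    exact Real.sqrt_le_sqrt (by nlinarith)
  -- decomposition
  have key : (fun t : ℝ => F13 n c t r) = fun t : ℝ => Pf c m r t - (Gf c m r ∘ sf) t := by
    funext t
    simp only [F13, Pf, Gf, sf, Function.comp, ← hmdef]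
    congr 1
    · exact Finset.sum_congr rfl fun j _ => by push_cast; ring
    · congr 1
      · congr 1
        push_cast
        ring
      · exact Finset.sum_congr rfl fun j _ => by push_cast; ring
  rw [key]
  have hsplit : ‖iteratedDeriv ℓ (fun t : ℝ => Pf c m r t - (Gf c m r ∘ sf) t) η‖
      ≤ ‖iteratedDeriv ℓ (Pf c m r) η‖ + ‖iteratedDeriv ℓ (Gf c m r ∘ sf) η‖ := by
    rw [iteratedDeriv_sub' (Pf_contDiff c m r) ((Gf_contDiff c m r).comp sf_contDiff) η]
    exact norm_sub_le _ _
  -- polynomial part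
  have hP : ‖iteratedDeriv ℓ (Pf c m r) η‖
      ≤ A * (r ^ (ℓ : ℝ) * (1 + η * r) ^ ((m : ℝ) - ℓ)) := by
    have hrw : Pf c m r
        = fun t : ℝ => ∑ j ∈ Finset.range (m + 1), ((c j : ℂ) * (r : ℂ) ^ j) * (t : ℂ) ^ j := rfl
    rw [hrw, polyIterDeriv]
    refine le_trans (norm_sum_le _ _) ?_
    rw [hAdef, Finset.sum_mul]
    refine Finset.sum_le_sum fun j hj => ?_
    rw [Finset.mem_range] at hj
    have hjm : j ≤ m := by omega
    have hnorm : ‖(c j : ℂ) * (r : ℂ) ^ j * ((j.descFactorial ℓ : ℕ) : ℂ) * (η : ℂ) ^ (j - ℓ)‖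
        = |c j| * (j.descFactorial ℓ : ℝ) * (r ^ j * η ^ (j - ℓ)) := by
      simp only [norm_mul, norm_pow, Complex.norm_real, Complex.norm_natCast,
        Real.norm_eq_abs, abs_of_pos hr, abs_of_pos hη]
      ring
    rw [hnorm]
    rcases lt_or_ge j ℓ with hjl | hjl
    · rw [Nat.descFactorial_eq_zero_iff_lt.2 hjl]
      simp only [Nat.cast_zero, mul_zero, zero_mul]
      positivity
    · have e0 : r ^ j = r ^ ℓ * r ^ (j - ℓ) := by
        rw [← pow_add]; congr 1; omega
      have e1 : r ^ j * η ^ (j - ℓ) = r ^ ℓ * (η * r) ^ (j - ℓ) := by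
        rw [e0, mul_pow]; ring
      have e2 : (η * r) ^ (j - ℓ) ≤ (1 + η * r) ^ (j - ℓ) :=
        pow_le_pow_left₀ (by positivity) (by linarith) _
      have e3 : ((1 + η * r) : ℝ) ^ (j - ℓ) = (1 + η * r) ^ ((j : ℝ) - ℓ) := by
        rw [← Real.rpow_natCast (1 + η * r) (j - ℓ), Nat.cast_sub hjl]
      have e4 : (1 + η * r) ^ ((j : ℝ) - ℓ) ≤ (1 + η * r) ^ ((m : ℝ) - ℓ) :=
        Real.rpow_le_rpow_of_exponent_le (by linarith)
          (by have : (j : ℝ) ≤ (m : ℝ) := Nat.cast_le.2 hjm; linarith)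
      have e5 : r ^ (ℓ : ℝ) = r ^ ℓ := Real.rpow_natCast r ℓ
      have hfinal : r ^ j * η ^ (j - ℓ) ≤ r ^ (ℓ : ℝ) * (1 + η * r) ^ ((m : ℝ) - ℓ) := by
        rw [e1, e5]
        refine mul_le_mul_of_nonneg_left ?_ (by positivity)
        calc (η * r) ^ (j - ℓ) ≤ (1 + η * r) ^ (j - ℓ) := e2
          _ = (1 + η * r) ^ ((j : ℝ) - ℓ) := e3
          _ ≤ (1 + η * r) ^ ((m : ℝ) - ℓ) := e4
      have := mul_le_mul_of_nonneg_left hfinal (by positivity : (0:ℝ) ≤ |c j| * (j.descFactorial ℓ : ℝ))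
      linarith
  -- exponential part
  have hG : ‖iteratedDeriv ℓ (Gf c m r ∘ sf) η‖
      ≤ (ℓ.factorial : ℝ) * (2 ^ ℓ * K1 * ((1 + r) ^ m * ((1 + r) ^ ℓ * Real.exp (-r)))) * D ^ ℓ := by
    rw [← norm_iteratedFDeriv_eq_norm_iteratedDeriv]
    refine norm_iteratedFDeriv_comp_le (N := (ℓ : WithTop ℕ∞)) (Gf_contDiff c m r) sf_contDiff
      (le_refl _) η (fun i hi => ?_) (fun i hi1 hi2 => ?_)
    · exact Gf_bound c m hr ℓ hi hs1 hs2
    · exact hD i hi1 hi2 η ⟨hη.le, by linarith⟩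
  -- assemble the first bound
  have hYfact : (1 + r) ^ ((m : ℝ) + ℓ) = (1 + r) ^ m * (1 + r) ^ ℓ := by
    rw [Real.rpow_add (by linarith), Real.rpow_natCast, Real.rpow_natCast]
  set X : ℝ := r ^ (ℓ : ℝ) * (1 + η * r) ^ ((m : ℝ) - ℓ) with hXdef
  set Y : ℝ := (1 + r) ^ m * ((1 + r) ^ ℓ * Real.exp (-r)) with hYdef
  have hX0 : 0 ≤ X := by positivity
  have hY0 : 0 ≤ Y := by positivity
  have hfirst : ‖iteratedDeriv ℓ (fun t : ℝ => Pf c m r t - (Gf c m r ∘ sf) t) η‖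
      ≤ (A + B) * (X + (1 + r) ^ ((m : ℝ) + ℓ) * Real.exp (-r)) := by
    have hGB : (ℓ.factorial : ℝ) * (2 ^ ℓ * K1 * Y) * D ^ ℓ ≤ B * Y := by
      have : (ℓ.factorial : ℝ) * (2 ^ ℓ * K1 * Y) * D ^ ℓ
          = ((ℓ.factorial : ℝ) * 2 ^ ℓ * K1 * D ^ ℓ) * Y := by ring
      rw [this]
      refine mul_le_mul_of_nonneg_right ?_ hY0
      rw [hBdef]; linarith
    have h1 : ‖iteratedDeriv ℓ (fun t : ℝ => Pf c m r t - (Gf c m r ∘ sf) t) η‖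
        ≤ A * X + B * Y := by
      refine le_trans hsplit ?_
      have := le_trans hG hGB
      linarith
    have h2 : A * X + B * Y ≤ (A + B) * (X + Y) := by nlinarith
    have h3 : (1 + r) ^ ((m : ℝ) + ℓ) * Real.exp (-r) = Y := by
      rw [hYfact, hYdef]; ring
    rw [h3]
    linarith
  refine ⟨hfirst, ?_⟩
  -- second bound
  have hXZ : X ≤ η ^ (-(ℓ : ℝ)) * (1 + η * r) ^ (m : ℝ) := by
    have h1 : r ^ (ℓ : ℝ) = η ^ (-(ℓ : ℝ)) * (η * r) ^ (ℓ : ℝ) := by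
      rw [Real.mul_rpow hη.le hr.le, ← mul_assoc, ← Real.rpow_add hη]
      simp
    have h2 : (η * r) ^ (ℓ : ℝ) ≤ (1 + η * r) ^ (ℓ : ℝ) :=
      Real.rpow_le_rpow (by positivity) (by linarith) (by positivity)
    have h3 : (ℓ : ℝ) + ((m : ℝ) - ℓ) = (m : ℝ) := by ring
    calc X = η ^ (-(ℓ : ℝ)) * ((η * r) ^ (ℓ : ℝ) * (1 + η * r) ^ ((m : ℝ) - ℓ)) := by
          rw [hXdef, h1]; ring
      _ ≤ η ^ (-(ℓ : ℝ)) * ((1 + η * r) ^ (ℓ : ℝ) * (1 + η * r) ^ ((m : ℝ) - ℓ)) := by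
          refine mul_le_mul_of_nonneg_left ?_ (by positivity)
          exact mul_le_mul_of_nonneg_right h2 (by positivity)
      _ = η ^ (-(ℓ : ℝ)) * (1 + η * r) ^ (m : ℝ) := by
          rw [← Real.rpow_add (by linarith : (0:ℝ) < 1 + η * r), h3]
  have hYM : (1 + r) ^ ((m : ℝ) + ℓ) * Real.exp (-r) ≤ M := by
    have hcast : (1 + r) ^ ((m : ℝ) + ℓ) = (1 + r) ^ (m + ℓ) := by
      rw [← Real.rpow_natCast (1 + r) (m + ℓ)]
      congr 1
      push_cast
      ring
    rw [hcast]
    have hpe := pow_mul_exp_neg_le (m + ℓ) (x := 1 + r) (by linarith)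
    have hexp : Real.exp (-r) = Real.exp 1 * Real.exp (-(1 + r)) := by
      rw [← Real.exp_add]; congr 1; ring
    rw [hexp, hMdef]
    calc (1 + r) ^ (m + ℓ) * (Real.exp 1 * Real.exp (-(1 + r)))
        = Real.exp 1 * ((1 + r) ^ (m + ℓ) * Real.exp (-(1 + r))) := by ring
      _ ≤ Real.exp 1 * ((m + ℓ).factorial : ℝ) := by
          exact mul_le_mul_of_nonneg_left hpe (Real.exp_pos 1).le
  have hZ1 : 1 ≤ η ^ (-(ℓ : ℝ)) * (1 + η * r) ^ (m : ℝ) := by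
    have ha : 1 ≤ η ^ (-(ℓ : ℝ)) :=
      Real.one_le_rpow_of_pos_of_le_one_of_nonpos hη (by linarith)
        (neg_nonpos.2 (Nat.cast_nonneg ℓ))
    have hb : 1 ≤ (1 + η * r) ^ (m : ℝ) :=
      Real.one_le_rpow (by linarith) (Nat.cast_nonneg m)
    have hc := mul_le_mul ha hb zero_le_one (le_trans zero_le_one ha)
    linarith
  set Z : ℝ := η ^ (-(ℓ : ℝ)) * (1 + η * r) ^ (m : ℝ) with hZdef
  have hZ0 : 0 ≤ Z := by linarith
  calc ‖iteratedDeriv ℓ (fun t : ℝ => Pf c m r t - (Gf c m r ∘ sf) t) η‖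
      ≤ (A + B) * (X + (1 + r) ^ ((m : ℝ) + ℓ) * Real.exp (-r)) := hfirst
    _ ≤ (A + B) * (Z + M * Z) := by
        refine mul_le_mul_of_nonneg_left ?_ (by linarith)
        have : (1 + r) ^ ((m : ℝ) + ℓ) * Real.exp (-r) ≤ M * Z := by
          calc (1 + r) ^ ((m : ℝ) + ℓ) * Real.exp (-r) ≤ M := hYM
            _ = M * 1 := (mul_one M).symm
            _ ≤ M * Z := mul_le_mul_of_nonneg_left hZ1 hM0.le
        linarith
    _ = (A + B) * (1 + M) * η ^ (-(ℓ : ℝ)) * (1 + η * r) ^ (m : ℝ) := by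
        rw [hZdef]; ring
end
end
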